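/- Let k be an algebraically closed field of characteristic 0, n ≥ 1, and B an n×n matrix over k. Assume that the coefficient of λ^i in the characteristic polynomial of B vanishes whenever n − i is odd, and that B is regular, i.e. the minimal polynomial of B has degree n. Then B is conjugate to −B: there exists an invertible n×n matrix A over k such that A B A⁻¹ = −B. -/

import Mathlib

open Polynomial

lemma exists_cyclic_vector {k : Type*} [Field k] [IsAlgClosed k] [Infinite k] {n : ℕ}
    (hn : 1 ≤ n) (f : Module.End k (Fin n → k))
    (hf : (minpoly k f).natDegree = n) :
    ∃ v : Fin n → k, LinearIndependent k (fun i : Fin n => (f ^ (i : ℕ)) v) := by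
  classical
  set μ := minpoly k f with hμ
  have hint : IsIntegral k f := IsIntegral.of_finite k f
  have hmonic : μ.Monic := minpoly.monic hint
  have hμ0 : μ ≠ 0 := hmonic.ne_zero
  have hμdeg : μ.degree = (n : ℕ) := by
    rw [degree_eq_natDegree hμ0, hf]
  set W : k → Submodule k (Fin n → k) :=
    fun t => LinearMap.ker (aeval f (μ /ₘ (X - C t))) with hW
  have hWne : ∀ t ∈ μ.roots, W t ≠ ⊤ := by
    intro t ht hWt
    have hroot : IsRoot μ t := isRoot_of_mem_roots ht
    have hfac : (X - C t) * (μ /ₘ (X - C t)) = μ := mul_divByMonic_eq_iff_isRoot.mpr hroot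
    have hq0 : μ /ₘ (X - C t) ≠ 0 := by
      intro h; rw [h, mul_zero] at hfac; exact hμ0 hfac.symm
    have hqdeg : (μ /ₘ (X - C t)).degree < μ.degree :=
      degree_divByMonic_lt _ _ hμ0 (by rw [degree_X_sub_C]; norm_num)
    have haev : aeval f (μ /ₘ (X - C t)) = 0 := LinearMap.ker_eq_top.mp hWt
    exact absurd (minpoly.degree_le_of_ne_zero k f hq0 haev) (not_le.mpr hqdeg)
  set s : Finset (Subspace k (Fin n → k)) := μ.roots.toFinset.image W with hs
  have htop : ⊤ ∉ s := by
    intro h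
    obtain ⟨t, ht, hWt⟩ := Finset.mem_image.mp h
    exact hWne t (Multiset.mem_toFinset.mp ht) hWt
  have hunion := Subspace.biUnion_ne_univ_of_top_notMem htop
  obtain ⟨v, hv⟩ := Set.ne_univ_iff_exists_notMem _ |>.mp hunion
  have hv' : ∀ t ∈ μ.roots, (aeval f (μ /ₘ (X - C t))) v ≠ 0 := by
    intro t ht h0
    exact hv (Set.mem_biUnion (Finset.mem_image.mpr ⟨t, Multiset.mem_toFinset.mpr ht, rfl⟩) h0)
  refine ⟨v, ?_⟩
  rw [Fintype.linearIndependent_iff]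
  intro c hc
  by_contra hcontra
  push_neg at hcontra
  obtain ⟨j, hj⟩ := hcontra
  set p : k[X] := ∑ i : Fin n, C (c i) * X ^ (i : ℕ) with hp
  have hp0 : p ≠ 0 := by
    intro h
    apply hj
    have hcoeff : p.coeff (j : ℕ) = c j := by
      rw [hp, finset_sum_coeff]
      rw [Finset.sum_eq_single j]
      · simp
      · intro i _ hij
        simp only [coeff_C_mul, coeff_X_pow]
        rw [if_neg (by simpa [Fin.val_eq_val] using Ne.symm hij), mul_zero]
      · simp
    rw [h, coeff_zero] at hcoeff
    exact hcoeff.symm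
  have hpdeg : p.degree < (n : ℕ) := by
    rw [hp]
    refine lt_of_le_of_lt (degree_sum_le _ _) ?_
    rw [Finset.sup_lt_iff (by exact_mod_cast WithBot.bot_lt_coe _)]
    intro i _
    refine lt_of_le_of_lt (degree_C_mul_X_pow_le _ _) ?_
    exact_mod_cast i.isLt
  have haevp : (aeval f p) v = 0 := by
    rw [← hc, hp, map_sum]
    simp [Algebra.smul_def, Module.End.mul_apply]
  obtain ⟨g, hgp, hgμ, hgv⟩ :
      ∃ g : k[X], g ∣ p ∧ g ∣ μ ∧ (aeval f g) v = 0 := by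
    refine ⟨EuclideanDomain.gcd p μ, EuclideanDomain.gcd_dvd_left p μ,
      EuclideanDomain.gcd_dvd_right p μ, ?_⟩
    rw [EuclideanDomain.gcd_eq_gcd_ab p μ, map_add]
    have h1 : aeval f (p * EuclideanDomain.gcdA p μ) =
        aeval f (EuclideanDomain.gcdA p μ) * aeval f p := by rw [mul_comm p, map_mul]
    have h2 : aeval f (μ * EuclideanDomain.gcdB p μ) =
        aeval f (EuclideanDomain.gcdB p μ) * aeval f μ := by rw [mul_comm μ, map_mul]
    rw [LinearMap.add_apply, h1, h2, Module.End.mul_apply, Module.End.mul_apply,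
      haevp, minpoly.aeval, map_zero, LinearMap.zero_apply, map_zero, add_zero]
  have hgdeg : g.degree < μ.degree := by
    calc g.degree ≤ p.degree := degree_le_of_dvd hgp hp0
    _ < (n : ℕ) := hpdeg
    _ = μ.degree := hμdeg.symm
  obtain ⟨cq, hcq⟩ := hgμ
  have hcq0 : cq ≠ 0 := by
    intro h; rw [h, mul_zero] at hcq; exact hμ0 hcq
  have hg0 : g ≠ 0 := by
    intro h; rw [h, zero_mul] at hcq; exact hμ0 hcq
  have hcqdeg : cq.degree ≠ 0 := by
    intro h
    have : μ.degree = g.degree := by rw [hcq, degree_mul, h, add_zero]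
    rw [this] at hgdeg
    exact lt_irrefl _ hgdeg
  obtain ⟨t, ht⟩ := IsAlgClosed.exists_root cq hcqdeg
  have htμ : t ∈ μ.roots := by
    rw [mem_roots hμ0]
    show IsRoot μ t
    rw [hcq]
    simp [IsRoot, eval_mul, ht.eq_zero]
  -- X - C t divides cq
  obtain ⟨d, hd⟩ := dvd_iff_isRoot.mpr ht
  have hμfac : μ = (X - C t) * (d * g) := by
    rw [hcq, hd]; ring
  have hdiv : μ /ₘ (X - C t) = d * g := by
    rw [hμfac, mul_divByMonic_cancel_left _ (monic_X_sub_C t)]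
  apply hv' t htμ
  rw [hdiv, map_mul, Module.End.mul_apply, hgv, map_zero]

section
variable {k : Type*} [Field k] [IsAlgClosed k] [Infinite k] {n : ℕ}

lemma exists_conj_equiv (hn : 1 ≤ n) (f g : Module.End k (Fin n → k))
    (hf : (minpoly k f).natDegree = n) (hfg : minpoly k g = minpoly k f) :
    ∃ E : (Fin n → k) ≃ₗ[k] (Fin n → k), ∀ x, E (f x) = g (E x) := by
  have hnz : NeZero n := ⟨by omega⟩
  obtain ⟨v, hv⟩ := exists_cyclic_vector hn f hf
  obtain ⟨w, hw⟩ := exists_cyclic_vector hn g (by rw [hfg, hf])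
  have hcard : Fintype.card (Fin n) = Module.finrank k (Fin n → k) := by simp
  let bv := basisOfLinearIndependentOfCardEqFinrank hv hcard
  let bw := basisOfLinearIndependentOfCardEqFinrank hw hcard
  have hbv : ∀ i : Fin n, bv i = (f ^ (i : ℕ)) v := fun i => by
    rw [show bv = _ from rfl, coe_basisOfLinearIndependentOfCardEqFinrank]
  have hbw : ∀ i : Fin n, bw i = (g ^ (i : ℕ)) w := fun i => by
    rw [show bw = _ from rfl, coe_basisOfLinearIndependentOfCardEqFinrank]
  let E : (Fin n → k) ≃ₗ[k] (Fin n → k) := bv.equiv bw (Equiv.refl _)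
  have hE : ∀ i : Fin n, E ((f ^ (i : ℕ)) v) = (g ^ (i : ℕ)) w := by
    intro i
    rw [← hbv, ← hbw]
    simpa [E] using bv.equiv_apply (e := Equiv.refl _) i bw
  set μ := minpoly k f with hμdef
  have hμf : aeval f μ = 0 := minpoly.aeval k f
  have hμg : aeval g μ = 0 := by rw [← hfg]; exact minpoly.aeval k g
  have hint : IsIntegral k f := IsIntegral.of_finite k f
  have hmonic : μ.Monic := minpoly.monic hint
  have hμdeg : μ.degree = (n : ℕ) := by rw [degree_eq_natDegree hmonic.ne_zero, hf]
  set r : k[X] := X ^ n - μ with hr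
  have hrdeg : r.natDegree < n := by
    rcases eq_or_ne r 0 with h | h
    · rw [h]; simpa using (show 0 < n by omega)
    · refine (natDegree_lt_iff_degree_lt h).mpr ?_
      have hd : r.degree < (X ^ n : k[X]).degree := by
        refine degree_sub_lt (by rw [degree_X_pow, hμdeg]) (pow_ne_zero _ X_ne_zero) ?_
        rw [(monic_X_pow n).leadingCoeff, hmonic.leadingCoeff]
      rwa [degree_X_pow] at hd
  have hfr : aeval f r = f ^ n := by rw [hr, map_sub, aeval_X_pow, hμf, sub_zero]
  have hgr : aeval g r = g ^ n := by rw [hr, map_sub, aeval_X_pow, hμg, sub_zero]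
  have hsum_f : (f ^ n) v = ∑ i ∈ Finset.range n, r.coeff i • (f ^ i) v := by
    rw [← hfr, aeval_eq_sum_range' hrdeg]
    simp
  have hsum_g : (g ^ n) w = ∑ i ∈ Finset.range n, r.coeff i • (g ^ i) w := by
    rw [← hgr, aeval_eq_sum_range' hrdeg]
    simp
  have hEn : E ((f ^ n) v) = (g ^ n) w := by
    rw [hsum_f, map_sum, hsum_g]
    refine Finset.sum_congr rfl fun i hi => ?_
    rw [map_smul]
    congr 1
    exact hE ⟨i, Finset.mem_range.mp hi⟩
  have key : ∀ m : ℕ, m ≤ n → E ((f ^ m) v) = (g ^ m) w := by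
    intro m hm
    rcases lt_or_eq_of_le hm with h | h
    · exact hE ⟨m, h⟩
    · subst h; exact hEn
  have hcomp : (E.toLinearMap ∘ₗ (f : (Fin n → k) →ₗ[k] (Fin n → k)))
      = ((g : (Fin n → k) →ₗ[k] (Fin n → k)) ∘ₗ E.toLinearMap) := by
    apply bv.ext; intro i
    simp only [LinearMap.comp_apply, LinearEquiv.coe_coe]
    rw [hbv i]
    have h1 : f ((f ^ (i : ℕ)) v) = (f ^ ((i : ℕ) + 1)) v := by
      rw [pow_succ']; rfl
    rw [h1, key ((i : ℕ) + 1) i.isLt, hE i, pow_succ']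
    rfl
  refine ⟨E, fun x => ?_⟩
  have := LinearMap.ext_iff.mp hcomp x
  simpa using this

end

/-- Let `k` be an algebraically closed field of characteristic 0,
`n ≥ 1`, and `B` an `n × n` matrix over `k`.  Assume the coefficient of `λ^i` in the
characteristic polynomial of `B` vanishes whenever `n - i` is odd, and that `B` is
regular, i.e. its minimal polynomial has degree `n`.  Then `B` is conjugate to `-B`:
there is an invertible matrix `A` with `A B A⁻¹ = -B`. -/
theorem regular_matrix_conjugate_to_neg
    (k : Type*) [Field k] [IsAlgClosed k] [CharZero k]
    (n : ℕ) (hn : 1 ≤ n)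
    (B : Matrix (Fin n) (Fin n) k)
    (hchar : ∀ i : ℕ, Odd (n - i) → (Matrix.charpoly B).coeff i = 0)
    (hreg : (minpoly k B).natDegree = n) :
    ∃ A : Matrix (Fin n) (Fin n) k, IsUnit A ∧ A * B * A⁻¹ = -B := by
  classical
  haveI : Infinite k := inferInstance
  set χ := Matrix.charpoly B with hχ
  have hχmonic : χ.Monic := Matrix.charpoly_monic B
  have hχdeg : χ.natDegree = n := by
    rw [hχ, Matrix.charpoly_natDegree_eq_dim, Fintype.card_fin]
  -- minpoly B = charpoly B
  have hBint : IsIntegral k B := IsIntegral.of_finite k B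
  have hmin : minpoly k B = χ :=
    eq_of_dvd_of_natDegree_le_of_leadingCoeff
      (minpoly.dvd k B (Matrix.aeval_self_charpoly B))
      (by rw [hreg, hχdeg])
      (by rw [(minpoly.monic hBint).leadingCoeff, hχmonic.leadingCoeff])
  -- χ annihilates -B
  have haevB : aeval B χ = 0 := Matrix.aeval_self_charpoly B
  have haevnegB : aeval (-B) χ = 0 := by
    have hlt : χ.natDegree < n + 1 := by omega
    rw [aeval_eq_sum_range' hlt]
    have hBsum : aeval B χ = ∑ i ∈ Finset.range (n + 1), χ.coeff i • B ^ i :=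
      aeval_eq_sum_range' hlt B
    have hterm : ∀ i ∈ Finset.range (n + 1),
        χ.coeff i • (-B) ^ i = ((-1 : k) ^ n) • (χ.coeff i • B ^ i) := by
      intro i hi
      have hin : i ≤ n := by have := Finset.mem_range.mp hi; omega
      rcases Nat.even_or_odd (n - i) with he | ho
      · have hpow : (-B) ^ i = ((-1 : k) ^ i) • B ^ i := by
          rw [← neg_one_smul k B, _root_.smul_pow]
        have hsign : ((-1 : k) ^ i) = (-1 : k) ^ n := by
          conv_rhs => rw [← Nat.add_sub_cancel' hin]
          rw [pow_add, he.neg_one_pow, mul_one]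
        rw [hpow, hsign, smul_comm]
      · rw [hchar i ho, zero_smul, zero_smul, smul_zero]
    rw [Finset.sum_congr rfl hterm, ← Finset.smul_sum, ← hBsum, haevB, smul_zero]
  -- minpoly (-B) = χ
  have hnegint : IsIntegral k (-B) := IsIntegral.of_finite k (-B)
  have hmneg : minpoly k (-B) = χ := by
    set m := minpoly k (-B) with hm
    have hmmonic : m.Monic := minpoly.monic hnegint
    set p : k[X] := m.comp (-X) with hp
    have hp0 : p ≠ 0 := by
      intro h
      have : m = 0 := by
        have h2 : p.comp (-X) = m := by
          rw [hp, comp_assoc]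
          simp [neg_comp, X_comp]
        rw [h, zero_comp] at h2
        exact h2.symm
      exact hmmonic.ne_zero this
    have haevp : aeval B p = 0 := by
      rw [hp, aeval_comp]
      simp only [map_neg, aeval_X]
      exact minpoly.aeval k (-B)
    have hdegp : p.natDegree = m.natDegree := by
      rw [hp, natDegree_comp]
      simp
    have hle : n ≤ m.natDegree := by
      have h1 := minpoly.degree_le_of_ne_zero k B hp0 haevp
      have h2 : (minpoly k B).natDegree ≤ p.natDegree := natDegree_le_natDegree h1
      rwa [hreg, hdegp] at h2
    exact eq_of_dvd_of_natDegree_le_of_leadingCoeff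
      (minpoly.dvd k (-B) haevnegB)
      (by rw [hχdeg]; exact hle)
      (by rw [hmmonic.leadingCoeff, hχmonic.leadingCoeff])
  -- pass to endomorphisms
  set f : Module.End k (Fin n → k) := Matrix.toLinAlgEquiv' B with hf
  set g : Module.End k (Fin n → k) := Matrix.toLinAlgEquiv' (-B) with hg
  have hminf : minpoly k f = χ := by
    rw [hf, minpoly.algEquiv_eq, hmin]
  have hming : minpoly k g = χ := by
    rw [hg, minpoly.algEquiv_eq, hmneg]
  obtain ⟨E, hE⟩ := exists_conj_equiv hn f g (by rw [hminf, hχdeg]) (by rw [hminf, hming])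
  set A : Matrix (Fin n) (Fin n) k := LinearMap.toMatrixAlgEquiv' E.toLinearMap with hA
  set A' : Matrix (Fin n) (Fin n) k := LinearMap.toMatrixAlgEquiv' E.symm.toLinearMap with hA'
  have hAA' : A * A' = 1 := by
    rw [hA, hA', ← map_mul]
    have : (E.toLinearMap * E.symm.toLinearMap : Module.End k (Fin n → k)) = 1 := by
      ext x
      simp [Module.End.mul_apply]
    rw [this, map_one]
  have hA'A : A' * A = 1 := by
    rw [hA, hA', ← map_mul]
    have : (E.symm.toLinearMap * E.toLinearMap : Module.End k (Fin n → k)) = 1 := by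
      ext x
      simp [Module.End.mul_apply]
    rw [this, map_one]
  have hunit : IsUnit A := ⟨⟨A, A', hAA', hA'A⟩, rfl⟩
  have hcomm : A * B = (-B) * A := by
    have hend : (E.toLinearMap * f : Module.End k (Fin n → k)) = g * E.toLinearMap := by
      apply LinearMap.ext; intro x
      simpa [Module.End.mul_apply] using hE x
    have := congrArg LinearMap.toMatrixAlgEquiv' hend
    rw [map_mul, map_mul] at this
    rwa [hf, hg, LinearMap.toMatrixAlgEquiv'_toLinAlgEquiv',
      LinearMap.toMatrixAlgEquiv'_toLinAlgEquiv', ← hA] at this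
  refine ⟨A, hunit, ?_⟩
  have hdet : IsUnit A.det := (Matrix.isUnit_iff_isUnit_det A).mp hunit
  have hinv : A * A⁻¹ = 1 := Matrix.mul_nonsing_inv A hdet
  rw [hcomm, mul_assoc, hinv, mul_one]
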